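/- Let N, K ≥ 1 and let A_k, B_k ∈ ℝ^{N×N} for k ∈ {1,…,K}. Define S_{ki} := ∑_{j=1}^N exp((A_k B_k^T)_{ij}), let f(C) := ∑_{i=1}^N ∑_{k=1}^K S_{ki}(C)/(1 + S_{ki}(C)) with S_{ki}(C) := ∑_{j=1}^N exp((A_k B_k^T)_{ij} + C_k[i,j]), and let g(D) := ∑_{i=1}^N ∑_{k=1}^K D_k[i]/(1 + S_{ki}) for D = (D_1,…,D_K) ∈ (ℝ^N)^K. Then for all k ∈ {1,…,K} and i₀, j₀ ∈ {1,…,N}: ln( ∂f/∂C_k[i₀,j₀] evaluated at C = 0 ) − 2·ln( ∂g/∂D_k[i₀] ) = (A_k B_k^T)_{i₀ j₀}. In particular, the entries of all K matrix products A_k B_k^T are recovered from these partial derivatives. -/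

import Mathlib

open scoped BigOperators

section Aux

variable {N K : ℕ}

/-- coordinate evaluation on the `C` space -/
noncomputable def evC (k : Fin K) (i j : Fin N) :
    (Fin K → Fin N → Fin N → ℝ) →L[ℝ] ℝ :=
  (ContinuousLinearMap.proj j : (Fin N → ℝ) →L[ℝ] ℝ).comp
    (((ContinuousLinearMap.proj i : (Fin N → Fin N → ℝ) →L[ℝ] (Fin N → ℝ))).comp
      (ContinuousLinearMap.proj k : (Fin K → Fin N → Fin N → ℝ) →L[ℝ] (Fin N → Fin N → ℝ)))

@[simp] lemma evC_apply (k : Fin K) (i j : Fin N) (C : Fin K → Fin N → Fin N → ℝ) :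
    evC k i j C = C k i j := rfl

/-- coordinate evaluation on the `D` space -/
noncomputable def evD (k : Fin K) (i : Fin N) :
    (Fin K → Fin N → ℝ) →L[ℝ] ℝ :=
  (ContinuousLinearMap.proj i : (Fin N → ℝ) →L[ℝ] ℝ).comp
    (ContinuousLinearMap.proj k : (Fin K → Fin N → ℝ) →L[ℝ] (Fin N → ℝ))

@[simp] lemma evD_apply (k : Fin K) (i : Fin N) (D : Fin K → Fin N → ℝ) :
    evD k i D = D k i := rfl

end Aux

theorem matrix_product_recovery {N K : ℕ} (hN : 1 ≤ N) (hK : 1 ≤ K)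
    (A B : Fin K → Matrix (Fin N) (Fin N) ℝ)
    (S₀ : Fin K → Fin N → ℝ)
    (hS₀ : ∀ k i, S₀ k i = ∑ j : Fin N, Real.exp ((A k * (B k).transpose) i j))
    (S : Fin K → Fin N → (Fin K → Fin N → Fin N → ℝ) → ℝ)
    (hS : ∀ k i C, S k i C = ∑ j : Fin N,
      Real.exp ((A k * (B k).transpose) i j + C k i j))
    (f : (Fin K → Fin N → Fin N → ℝ) → ℝ)
    (hf : ∀ C, f C = ∑ i : Fin N, ∑ k : Fin K, S k i C / (1 + S k i C))
    (g : (Fin K → Fin N → ℝ) → ℝ)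
    (hg : ∀ D, g D = ∑ i : Fin N, ∑ k : Fin K, D k i / (1 + S₀ k i)) :
    ∀ (k : Fin K) (i₀ j₀ : Fin N),
      Real.log (fderiv ℝ f 0
          (fun k' i' j' => if k' = k ∧ i' = i₀ ∧ j' = j₀ then (1 : ℝ) else 0))
        - 2 * Real.log (fderiv ℝ g 0
          (fun k' i' => if k' = k ∧ i' = i₀ then (1 : ℝ) else 0))
        = (A k * (B k).transpose) i₀ j₀ := by
  intro k i₀ j₀
  set M : Fin K → Matrix (Fin N) (Fin N) ℝ := fun k => A k * (B k).transpose with hM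
  have hSpos : ∀ k i, 0 < S₀ k i := by
    intro k i
    rw [hS₀]
    exact Finset.sum_pos (fun j _ => Real.exp_pos _)
      ⟨⟨0, hN⟩, Finset.mem_univ _⟩
  have ht : ∀ k' i, (0:ℝ) < 1 + S₀ k' i := fun k' i => by linarith [hSpos k' i]
  have htne : ∀ k' i, (1:ℝ) + S₀ k' i ≠ 0 := fun k' i => (ht k' i).ne'
  -- the derivative of g
  set G : (Fin K → Fin N → ℝ) →L[ℝ] ℝ :=
    ∑ i : Fin N, ∑ k' : Fin K, (1 + S₀ k' i)⁻¹ • evD k' i with hG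
  have hgG : g = G := by
    funext D
    rw [hg]
    simp [hG, ContinuousLinearMap.sum_apply, div_eq_inv_mul]
  have hgderiv : fderiv ℝ g 0 = G := by
    rw [hgG]; exact G.fderiv
  -- the derivative of f
  set L : Fin N → Fin K → (Fin K → Fin N → Fin N → ℝ) →L[ℝ] ℝ :=
    fun i k' => ∑ j : Fin N, Real.exp (M k' i j) • evC k' i j with hL
  set F : (Fin K → Fin N → Fin N → ℝ) →L[ℝ] ℝ :=
    ∑ i : Fin N, ∑ k' : Fin K, (((1 + S₀ k' i) ^ 2)⁻¹) • L i k' with hF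
  have hfderiv : HasFDerivAt f F 0 := by
    have hfe : f = fun C => ∑ i : Fin N, ∑ k' : Fin K,
        (∑ j : Fin N, Real.exp (M k' i j + C k' i j)) /
          (1 + ∑ j : Fin N, Real.exp (M k' i j + C k' i j)) := by
      funext C
      rw [hf]
      exact Finset.sum_congr rfl fun i _ => Finset.sum_congr rfl fun k' _ => by
        rw [hS]
    rw [hfe, hF]
    apply HasFDerivAt.fun_sum
    intro i _
    apply HasFDerivAt.fun_sum
    intro k' _
    -- inner function φ
    have hφ : HasFDerivAt
        (fun C : Fin K → Fin N → Fin N → ℝ => ∑ j : Fin N, Real.exp (M k' i j + C k' i j))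
        (L i k') 0 := by
      rw [hL]
      apply HasFDerivAt.fun_sum
      intro j _
      have h1 : HasFDerivAt (fun C : Fin K → Fin N → Fin N → ℝ => M k' i j + C k' i j)
          (evC k' i j) 0 := by
        have := (hasFDerivAt_const (M k' i j)
          (0 : Fin K → Fin N → Fin N → ℝ)).fun_add (evC k' i j).hasFDerivAt
        simpa using this
      have := h1.exp
      simpa using this
    have hφ0 : (∑ j : Fin N, Real.exp (M k' i j + (0 : Fin K → Fin N → Fin N → ℝ) k' i j))
        = S₀ k' i := by
      rw [hS₀]; simp [hM]
    have hq : HasDerivAt (fun x : ℝ => x / (1 + x)) (((1 + S₀ k' i) ^ 2)⁻¹)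
        (∑ j : Fin N, Real.exp (M k' i j + (0 : Fin K → Fin N → Fin N → ℝ) k' i j)) := by
      rw [hφ0]
      have h := (hasDerivAt_id (S₀ k' i)).div
        ((hasDerivAt_const (S₀ k' i) (1:ℝ)).add (hasDerivAt_id (S₀ k' i))) (htne k' i)
      refine h.congr_deriv ?_
      simp
    have := hq.comp_hasFDerivAt (0 : Fin K → Fin N → Fin N → ℝ) hφ
    simpa [Function.comp_def] using this
  -- value of the f-derivative in the basis direction
  have hFval : fderiv ℝ f 0
      (fun k' i' j' => if k' = k ∧ i' = i₀ ∧ j' = j₀ then (1 : ℝ) else 0)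
      = Real.exp (M k i₀ j₀) / (1 + S₀ k i₀) ^ 2 := by
    rw [hfderiv.fderiv, hF]
    simp only [ContinuousLinearMap.sum_apply, ContinuousLinearMap.smul_apply, hL,
      evC_apply, smul_eq_mul]
    have hinner : ∀ (i : Fin N) (k' : Fin K),
        (∑ j : Fin N, Real.exp (M k' i j) *
          (if k' = k ∧ i = i₀ ∧ j = j₀ then (1:ℝ) else 0))
        = if k' = k then (if i = i₀ then Real.exp (M k i₀ j₀) else 0) else 0 := by
      intro i k'
      by_cases hk : k' = k
      · by_cases hi : i = i₀
        · subst hk; subst hi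
          simp [Finset.sum_ite_eq']
        · simp [hk, hi]
      · simp [hk]
    calc
      (∑ i : Fin N, ∑ k' : Fin K, ((1 + S₀ k' i) ^ 2)⁻¹ *
          ∑ j : Fin N, Real.exp (M k' i j) *
            (if k' = k ∧ i = i₀ ∧ j = j₀ then (1:ℝ) else 0))
        = ∑ i : Fin N, ∑ k' : Fin K, ((1 + S₀ k' i) ^ 2)⁻¹ *
            (if k' = k then (if i = i₀ then Real.exp (M k i₀ j₀) else 0) else 0) := by
          exact Finset.sum_congr rfl fun i _ => Finset.sum_congr rfl fun k' _ => by
            rw [hinner]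
      _ = Real.exp (M k i₀ j₀) / (1 + S₀ k i₀) ^ 2 := by
          rw [Finset.sum_comm]
          rw [Finset.sum_eq_single k]
          · rw [Finset.sum_eq_single i₀]
            · simp [div_eq_inv_mul, mul_comm]
            · intro i _ hi; simp [hi]
            · intro h; exact absurd (Finset.mem_univ i₀) h
          · intro k' _ hk'; simp [hk']
          · intro h; exact absurd (Finset.mem_univ k) h
  have hGval : fderiv ℝ g 0
      (fun k' i' => if k' = k ∧ i' = i₀ then (1 : ℝ) else 0)
      = (1 + S₀ k i₀)⁻¹ := by
    rw [hgderiv, hG]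
    simp only [ContinuousLinearMap.sum_apply, ContinuousLinearMap.smul_apply, evD_apply,
      smul_eq_mul]
    have hinner : ∀ (i : Fin N) (k' : Fin K),
        ((1 + S₀ k' i)⁻¹ * (if k' = k ∧ i = i₀ then (1:ℝ) else 0))
        = if k' = k then (if i = i₀ then (1 + S₀ k i₀)⁻¹ else 0) else 0 := by
      intro i k'
      by_cases hk : k' = k
      · by_cases hi : i = i₀
        · subst hk; subst hi; simp
        · simp [hk, hi]
      · simp [hk]
    rw [Finset.sum_congr rfl fun i _ => Finset.sum_congr rfl fun k' _ => hinner i k']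
    rw [Finset.sum_comm]
    rw [Finset.sum_eq_single k]
    · rw [Finset.sum_eq_single i₀]
      · simp
      · intro i _ hi; simp [hi]
      · intro h; exact absurd (Finset.mem_univ i₀) h
    · intro k' _ hk'; simp [hk']
    · intro h; exact absurd (Finset.mem_univ k) h
  rw [hFval, hGval]
  have h1 : Real.log (Real.exp (M k i₀ j₀) / (1 + S₀ k i₀) ^ 2)
      = M k i₀ j₀ - 2 * Real.log (1 + S₀ k i₀) := by
    rw [Real.log_div (Real.exp_pos _).ne' (pow_ne_zero 2 (htne k i₀)),
      Real.log_exp, Real.log_pow]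
    push_cast; ring
  have h2 : Real.log (1 + S₀ k i₀)⁻¹ = - Real.log (1 + S₀ k i₀) := Real.log_inv _
  rw [h1, h2]
  ring
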